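/- Let $g, h : [0, \infty) \to \mathbb{R}$ be bounded measurable functions such that $\int_0^\infty e^{-\mu t} g(t)\, dt = \int_0^\infty e^{-\mu t} h(t)\, dt$ for all $\mu > K$, for some $K > 0$. Then $g(t) = h(t)$ for Lebesgue-almost every $t \geq 0$. -/

import Mathlib

open MeasureTheory Real

/-- Any measurable function bounded on `Ioo 0 1` is integrable there. -/
lemma laplace_aux_integrableOn {u : ℝ → ℝ} (hu : Measurable u) {M : ℝ}
    (hM : ∀ x ∈ Set.Ioo (0:ℝ) 1, |u x| ≤ M) :
    IntegrableOn u (Set.Ioo (0:ℝ) 1) := by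
  refine Integrable.mono' (g := fun _ => M) ?_ hu.aestronglyMeasurable ?_
  · exact integrableOn_const measure_Ioo_lt_top.ne
  · exact (ae_restrict_iff' measurableSet_Ioo).2 (Filter.Eventually.of_forall
      fun x hx => by simpa [Real.norm_eq_abs] using hM x hx)

/-- Change of variables `x = exp (-t)` carrying `Ioo 0 1` to `Ioi 0`. -/
lemma laplace_aux_subst (G : ℝ → ℝ) :
    ∫ x in Set.Ioo (0:ℝ) 1, G x
      = ∫ t in Set.Ioi (0:ℝ), Real.exp (-t) * G (Real.exp (-t)) := by
  have himg : (fun t => Real.exp (-t)) '' Set.Ioi (0:ℝ) = Set.Ioo 0 1 := by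
    ext x
    constructor
    · rintro ⟨t, ht, rfl⟩
      exact ⟨Real.exp_pos _, Real.exp_lt_one_iff.2 (by have := Set.mem_Ioi.mp ht; linarith)⟩
    · rintro ⟨hx0, hx1⟩
      exact ⟨-Real.log x, by simpa using Real.log_neg hx0 hx1,
        by simp [Real.exp_log hx0]⟩
  have hderiv : ∀ t ∈ Set.Ioi (0:ℝ),
      HasDerivWithinAt (fun t => Real.exp (-t)) (-Real.exp (-t)) (Set.Ioi 0) t := by
    intro t _
    simpa [mul_comm, Function.comp_def] using
      (((Real.hasDerivAt_exp (-t)).comp t (hasDerivAt_neg t))).hasDerivWithinAt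
  have hinj : Set.InjOn (fun t => Real.exp (-t)) (Set.Ioi (0:ℝ)) := by
    intro a _ b _ hab
    exact neg_injective (Real.exp_injective hab)
  rw [← himg, integral_image_eq_integral_abs_deriv_smul measurableSet_Ioi hderiv hinj]
  simp [abs_of_pos (Real.exp_pos _), smul_eq_mul]

/-- Injectivity of the Laplace transform: if `g, h : [0,∞) → ℝ` are bounded measurable and
`∫₀^∞ e^{-μt} g(t) dt = ∫₀^∞ e^{-μt} h(t) dt` for all `μ > K` (some `K > 0`), then
`g = h` Lebesgue-almost everywhere on `[0,∞)`. -/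
theorem laplace_transform_injective (g h : ℝ → ℝ) (K : ℝ) (hK : 0 < K)
    (hgm : Measurable g) (hhm : Measurable h)
    (Cg : ℝ) (hgb : ∀ t, |g t| ≤ Cg)
    (Ch : ℝ) (hhb : ∀ t, |h t| ≤ Ch)
    (heq : ∀ μ : ℝ, K < μ →
      ∫ t in Set.Ioi (0 : ℝ), exp (-μ * t) * g t =
      ∫ t in Set.Ioi (0 : ℝ), exp (-μ * t) * h t) :
    ∀ᵐ t ∂(volume.restrict (Set.Ici (0 : ℝ))), g t = h t := by
  set f : ℝ → ℝ := fun t => g t - h t with hf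
  have hfm : Measurable f := hgm.sub hhm
  have hfb : ∀ t, |f t| ≤ Cg + Ch := fun t =>
    (abs_sub (g t) (h t)).trans (add_le_add (hgb t) (hhb t))
  have hCnn : (0:ℝ) ≤ Cg + Ch := le_trans (abs_nonneg _) (hfb 0)
  -- integrability of exponentially damped bounded functions
  have hint : ∀ (u : ℝ → ℝ) (C μ : ℝ), Measurable u → (∀ t, |u t| ≤ C) → 0 < μ →
      IntegrableOn (fun t => exp (-μ * t) * u t) (Set.Ioi (0:ℝ)) := by
    intro u C μ hum hub hμ
    refine Integrable.mono' (g := fun t => C * exp (-μ * t))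
      (((exp_neg_integrableOn_Ioi 0 hμ)).const_mul C)
      ((measurable_exp.comp (measurable_id.const_mul (-μ))).mul hum).aestronglyMeasurable
      (Filter.Eventually.of_forall fun t => ?_)
    have h1 : |exp (-μ * t) * u t| = exp (-μ * t) * |u t| := by
      rw [abs_mul, abs_of_pos (exp_pos _)]
    rw [Real.norm_eq_abs, h1]
    show exp (-μ * t) * |u t| ≤ C * exp (-μ * t)
    have := hub t
    nlinarith [exp_pos (-μ * t), abs_nonneg (u t)]
  -- the Laplace transform of f vanishes for μ > K
  have hL0 : ∀ μ : ℝ, K < μ → ∫ t in Set.Ioi (0:ℝ), exp (-μ * t) * f t = 0 := by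
    intro μ hμ
    have hμ0 : 0 < μ := hK.trans hμ
    have h1 : ∀ t, exp (-μ * t) * f t = exp (-μ * t) * g t - exp (-μ * t) * h t := by
      intro t; simp [hf, mul_sub]
    simp_rw [h1]
    rw [integral_sub (hint g Cg μ hgm hgb hμ0) (hint h Ch μ hhm hhb hμ0), heq μ hμ,
      sub_self]
  -- the transplanted function on (0,1)
  set W' : ℝ → ℝ := fun x => exp (K * Real.log x) * f (-Real.log x) with hW'
  have hW'm : Measurable W' :=
    (measurable_exp.comp (measurable_log.const_mul K)).mul (hfm.comp measurable_log.neg)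
  have hW'b : ∀ x ∈ Set.Ioo (0:ℝ) 1, |W' x| ≤ Cg + Ch := by
    intro x hx
    have h1 : |exp (K * Real.log x)| = exp (K * Real.log x) := abs_of_pos (exp_pos _)
    have h2 : exp (K * Real.log x) ≤ 1 := Real.exp_le_one_iff.2
      (mul_nonpos_of_nonneg_of_nonpos hK.le (Real.log_nonpos hx.1.le hx.2.le))
    calc |W' x| = exp (K * Real.log x) * |f (-Real.log x)| := by rw [hW', abs_mul, h1]
    _ ≤ 1 * (Cg + Ch) := mul_le_mul h2 (hfb _) (abs_nonneg _) zero_le_one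
    _ = Cg + Ch := one_mul _
  -- multiplication by a continuous function stays integrable on (0,1)
  have hmulint : ∀ φ : ℝ → ℝ, Continuous φ →
      IntegrableOn (fun x => φ x * W' x) (Set.Ioo (0:ℝ) 1) := by
    intro φ hφ
    obtain ⟨C, hC⟩ := (isCompact_Icc (a := (0:ℝ)) (b := 1)).exists_bound_of_continuousOn
      hφ.continuousOn
    have hC0 : 0 ≤ C := le_trans (norm_nonneg _) (hC 0 (by norm_num))
    refine laplace_aux_integrableOn (hφ.measurable.mul hW'm) (M := C * (Cg + Ch)) ?_
    intro x hx
    have h1 : |φ x| ≤ C := by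
      simpa [Real.norm_eq_abs] using hC x (Set.mem_Icc_of_Ioo hx)
    calc |φ x * W' x| = |φ x| * |W' x| := abs_mul _ _
    _ ≤ C * (Cg + Ch) := mul_le_mul h1 (hW'b x hx) (abs_nonneg _) hC0
  -- moments of W' vanish
  have hmom : ∀ n : ℕ, ∫ x in Set.Ioo (0:ℝ) 1, x ^ n * W' x = 0 := by
    intro n
    rw [laplace_aux_subst (fun x => x ^ n * W' x)]
    have key : ∀ t : ℝ, exp (-t) * (exp (-t) ^ n * W' (exp (-t)))
        = exp (-(K + n + 1) * t) * f t := by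
      intro t
      simp only [hW', Real.log_exp, neg_neg]
      rw [show exp (-t) * (exp (-t) ^ n * (exp (K * -t) * f t))
          = (exp (-t) * exp (-t) ^ n * exp (K * -t)) * f t from by ring,
        ← Real.exp_nat_mul, ← Real.exp_add, ← Real.exp_add]
      congr 1
      push_cast
      ring
    simp_rw [key]
    have hn : (0:ℝ) ≤ (n:ℝ) := Nat.cast_nonneg n
    exact hL0 (K + n + 1) (by linarith)
  -- polynomial moments vanish
  have hpmom : ∀ p : Polynomial ℝ, ∫ x in Set.Ioo (0:ℝ) 1, p.eval x * W' x = 0 := by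
    intro p
    have heval : ∀ x : ℝ, p.eval x * W' x
        = ∑ i ∈ Finset.range (p.natDegree + 1), p.coeff i * (x ^ i * W' x) := by
      intro x
      rw [Polynomial.eval_eq_sum_range, Finset.sum_mul]
      exact Finset.sum_congr rfl fun i _ => by ring
    simp_rw [heval]
    rw [integral_finset_sum _ fun i _ =>
      ((hmulint (fun x => x ^ i) (continuous_pow i)).const_mul _)]
    refine Finset.sum_eq_zero fun i _ => ?_
    rw [integral_const_mul, hmom i, mul_zero]
  -- integrals against smooth compactly supported functions vanish
  set W : ℝ → ℝ := (Set.Ioo (0:ℝ) 1).indicator W' with hWdef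
  have hWint : Integrable W := by
    rw [hWdef, integrable_indicator_iff measurableSet_Ioo]
    exact laplace_aux_integrableOn hW'm hW'b
  have hW0 : ∀ᵐ x ∂(volume : Measure ℝ), W x = 0 := by
    refine ae_eq_zero_of_integral_contDiff_smul_eq_zero hWint.locallyIntegrable ?_
    intro ψ hψ _
    have hrw : ∀ x : ℝ, ψ x • W x
        = (Set.Ioo (0:ℝ) 1).indicator (fun x => ψ x * W' x) x := by
      intro x
      by_cases hx : x ∈ Set.Ioo (0:ℝ) 1 <;>
        simp [hWdef, Set.indicator_of_mem, Set.indicator_of_notMem, hx, smul_eq_mul]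
    simp_rw [hrw]
    rw [integral_indicator measurableSet_Ioo]
    set I := ∫ x in Set.Ioo (0:ℝ) 1, ψ x * W' x with hI
    have hsmall : ∀ ε : ℝ, 0 < ε → |I| ≤ ε * (Cg + Ch) := by
      intro ε hε
      obtain ⟨p, hp⟩ := exists_polynomial_near_of_continuousOn 0 1 ψ
        hψ.continuous.continuousOn ε hε
      have hψint := hmulint ψ hψ.continuous
      have hpint := hmulint (fun x => p.eval x) p.continuous
      have hdiff : I = ∫ x in Set.Ioo (0:ℝ) 1, (ψ x - p.eval x) * W' x := by
        have : (fun x => (ψ x - p.eval x) * W' x)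
            = fun x => ψ x * W' x - p.eval x * W' x := by funext x; ring
        rw [this, integral_sub hψint hpint, hpmom p, sub_zero, hI]
      have hb : ∀ x ∈ Set.Ioo (0:ℝ) 1, ‖(ψ x - p.eval x) * W' x‖ ≤ ε * (Cg + Ch) := by
        intro x hx
        have h1 : |ψ x - p.eval x| ≤ ε := by
          have := hp x (Set.mem_Icc_of_Ioo hx)
          rw [abs_sub_comm]
          linarith [abs_nonneg (p.eval x - ψ x)]
        rw [Real.norm_eq_abs, abs_mul]
        exact mul_le_mul h1 (hW'b x hx) (abs_nonneg _) hε.le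
      have := norm_setIntegral_le_of_norm_le_const (C := ε * (Cg + Ch))
        (measure_Ioo_lt_top : volume (Set.Ioo (0:ℝ) 1) < ⊤) hb
      rw [← hdiff] at this
      simpa [Real.norm_eq_abs, Real.volume_real_Ioo] using this
    by_contra h0
    have habs : 0 < |I| := abs_pos.2 h0
    have h2 := hsmall (|I| / (2 * (Cg + Ch) + 2)) (by positivity)
    rw [div_mul_eq_mul_div, le_div_iff₀ (by positivity)] at h2
    nlinarith
  -- transfer the vanishing back to `(0, ∞)`
  set A : Set ℝ := {t | f t ≠ 0} with hA
  have hAm : MeasurableSet A := (hfm (measurableSet_singleton 0)).compl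
  have hSnull : volume (Set.Ioo (0:ℝ) 1 ∩ {x | f (-Real.log x) ≠ 0}) = 0 := by
    refine measure_mono_null (fun x hx => ?_) (ae_iff.1 hW0)
    obtain ⟨hx1, hx2⟩ := hx
    simp only [Set.mem_setOf_eq]
    have hWx : W x = W' x := Set.indicator_of_mem hx1 _
    rw [hWx]
    exact mul_ne_zero (exp_pos _).ne' hx2
  have hind : ∫ t in Set.Ioi (0:ℝ), exp (-t) * A.indicator (fun _ => (1:ℝ)) t = 0 := by
    have hGz : ∫ x in Set.Ioo (0:ℝ) 1, A.indicator (fun _ => (1:ℝ)) (-Real.log x) = 0 := by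
      refine integral_eq_zero_of_ae ?_
      rw [Filter.EventuallyEq, ae_restrict_iff' measurableSet_Ioo]
      have hae : ∀ᵐ x ∂(volume : Measure ℝ),
          x ∉ Set.Ioo (0:ℝ) 1 ∩ {x | f (-Real.log x) ≠ 0} :=
        measure_eq_zero_iff_ae_notMem.1 hSnull
      filter_upwards [hae] with x hx hx1
      have : f (-Real.log x) = 0 := by
        by_contra hc
        exact hx ⟨hx1, hc⟩
      simp [Set.indicator_apply, hA, this]
    have hsub := laplace_aux_subst (fun x => A.indicator (fun _ => (1:ℝ)) (-Real.log x))
    simp only [Real.log_exp, neg_neg] at hsub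
    rw [← hsub]
    exact hGz
  have hindm : Measurable (A.indicator (fun _ => (1:ℝ))) :=
    measurable_const.indicator hAm
  have hindb : ∀ t, |A.indicator (fun _ => (1:ℝ)) t| ≤ 1 := by
    intro t
    by_cases ht : t ∈ A <;> simp [Set.indicator_apply, ht]
  have hii : IntegrableOn (fun t => exp (-1 * t) * A.indicator (fun _ => (1:ℝ)) t)
      (Set.Ioi (0:ℝ)) := hint _ 1 1 hindm hindb one_pos
  have hnn : 0 ≤ᵐ[volume.restrict (Set.Ioi (0:ℝ))]
      fun t => exp (-1 * t) * A.indicator (fun _ => (1:ℝ)) t := by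
    refine Filter.Eventually.of_forall fun t => ?_
    have : 0 ≤ A.indicator (fun _ => (1:ℝ)) t := Set.indicator_nonneg (fun _ _ => zero_le_one) t
    positivity
  have hz : (fun t => exp (-1 * t) * A.indicator (fun _ => (1:ℝ)) t)
      =ᵐ[volume.restrict (Set.Ioi (0:ℝ))] 0 := by
    refine (integral_eq_zero_iff_of_nonneg_ae hnn hii).1 ?_
    have hfe : ∫ t in Set.Ioi (0:ℝ), exp (-1 * t) * A.indicator (fun _ => (1:ℝ)) t
        = ∫ t in Set.Ioi (0:ℝ), exp (-t) * A.indicator (fun _ => (1:ℝ)) t :=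
      integral_congr_ae (Filter.Eventually.of_forall fun t => by norm_num)
    exact hfe.trans hind
  have key : ∀ᵐ t ∂(volume.restrict (Set.Ioi (0:ℝ))), g t = h t := by
    filter_upwards [hz] with t ht
    have h1 : A.indicator (fun _ => (1:ℝ)) t = 0 := by
      have he : exp (-1 * t) ≠ 0 := (exp_pos _).ne'
      have := ht
      simp only [Pi.zero_apply] at this
      exact (mul_eq_zero.1 this).resolve_left he
    have h2 : t ∉ A := by
      intro hc
      rw [Set.indicator_of_mem hc] at h1
      exact one_ne_zero h1
    have h3 : f t = 0 := by simpa [hA] using h2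
    have := h3
    simp only [hf] at this
    linarith
  rwa [show (volume.restrict (Set.Ici (0:ℝ))) = volume.restrict (Set.Ioi 0) from
    (Measure.restrict_congr_set Ioi_ae_eq_Ici).symm]
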